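/- Let P₁ and P₂ be bounded projections (idempotents) on a Hilbert space H whose difference P₁ - P₂ is a compact operator. Then the operator P₂ restricted to a map from the range of P₁ (a closed subspace) to the range of P₂ is a Fredholm operator. -/

import Mathlib

open Metric Filter Topology

set_option maxHeartbeats 1000000
set_option synthInstance.maxHeartbeats 400000

section Helpers

variable {X Y : Type*} [NormedAddCommGroup X] [NormedSpace ℂ X]
  [NormedAddCommGroup Y] [NormedSpace ℂ Y]

/-- From a compact operator and a bounded sequence, extract a subsequence whose image
converges. -/
lemma aux_compact_subseq {C : X →L[ℂ] Y} (hC : IsCompactOperator ⇑C)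
    {u : ℕ → X} {M : ℝ} (hu : ∀ n, ‖u n‖ ≤ M) :
    ∃ φ : ℕ → ℕ, StrictMono φ ∧ ∃ y, Tendsto (fun n => C (u (φ n))) atTop (𝓝 y) := by
  have hb : Bornology.IsBounded (Set.range u) :=
    (Metric.isBounded_closedBall (x := (0 : X)) (r := M)).subset
      (by rintro _ ⟨n, rfl⟩; simpa [Metric.mem_closedBall, dist_zero_right] using hu n)
  have hC' : IsCompactOperator ⇑(C : X →ₗ[ℂ] Y) := hC
  obtain ⟨K, hK, hKsub⟩ := hC'.image_subset_compact_of_bounded hb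
  have hmem : ∀ n, C (u n) ∈ K := fun n => hKsub ⟨u n, ⟨n, rfl⟩, rfl⟩
  obtain ⟨y, _, φ, hφ, hy⟩ := hK.tendsto_subseq hmem
  exact ⟨φ, hφ, y, hy⟩

/-- If a compact operator is "bounded below" on a closed subspace, that subspace is
finite-dimensional. -/
lemma aux_findim_of_bound [CompleteSpace X] {C : X →L[ℂ] X} (hC : IsCompactOperator ⇑C)
    {S : Submodule ℂ X} (hS : IsClosed (S : Set X)) {c : ℝ}
    (h : ∀ x ∈ S, ‖x‖ ≤ c * ‖C x‖) : FiniteDimensional ℂ ↥S := by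
  set c' : ℝ := max c 1 with hc'def
  have hc'pos : (0 : ℝ) < c' := lt_of_lt_of_le one_pos (le_max_right _ _)
  have hc' : ∀ x ∈ S, ‖x‖ ≤ c' * ‖C x‖ := fun x hx =>
    (h x hx).trans (mul_le_mul_of_nonneg_right (le_max_left _ _) (norm_nonneg _))
  refine FiniteDimensional.of_isCompact_closedBall₀ (𝕜 := ℂ) one_pos ?_
  refine IsSeqCompact.isCompact ?_
  intro u hu
  have hub : ∀ n, ‖((u n : X))‖ ≤ 1 := by
    intro n
    have := hu n
    rwa [Metric.mem_closedBall, dist_zero_right] at this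
  obtain ⟨φ, hφ, y, hy⟩ := aux_compact_subseq hC hub
  have hCauchyC : CauchySeq fun n => C ((u (φ n) : X)) := hy.cauchySeq
  have hCauchy : CauchySeq fun n => ((u (φ n) : X)) := by
    rw [Metric.cauchySeq_iff] at hCauchyC ⊢
    intro ε hε
    obtain ⟨N, hN⟩ := hCauchyC (ε / c') (div_pos hε hc'pos)
    refine ⟨N, fun m hm n hn => ?_⟩
    have hmemS : (u (φ m) : X) - (u (φ n) : X) ∈ S := S.sub_mem (u _).2 (u _).2
    have hb := hc' _ hmemS
    rw [map_sub] at hb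
    have hd := hN m hm n hn
    rw [dist_eq_norm] at hd ⊢
    calc ‖(u (φ m) : X) - (u (φ n) : X)‖
        ≤ c' * ‖C (u (φ m) : X) - C (u (φ n) : X)‖ := hb
      _ < c' * (ε / c') := mul_lt_mul_of_pos_left hd hc'pos
      _ = ε := by field_simp
  obtain ⟨x, hx⟩ := cauchySeq_tendsto_of_complete hCauchy
  have hxS : x ∈ S := hS.mem_of_tendsto hx (Eventually.of_forall fun n => (u (φ n)).2)
  have hxn : ‖x‖ ≤ 1 :=
    le_of_tendsto' hx.norm (fun n => hub (φ n)) |>.trans_eq rfl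
  refine ⟨⟨x, hxS⟩, ?_, φ, hφ, ?_⟩
  · rw [Metric.mem_closedBall, dist_zero_right]
    exact hxn
  · exact tendsto_subtype_rng.2 hx

end Helpers

section Riesz

variable {X : Type*} [NormedAddCommGroup X] [InnerProductSpace ℂ X] [CompleteSpace X]

/-- Riesz theory: for a compact operator `C`, the operator `1 + C` has closed range with
finite-dimensional cokernel. -/
lemma aux_riesz {C : X →L[ℂ] X} (hC : IsCompactOperator ⇑C) :
    IsClosed ((LinearMap.range ((ContinuousLinearMap.id ℂ X + C : X →L[ℂ] X) : X →ₗ[ℂ] X) : Submodule ℂ X) : Set X) ∧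
      FiniteDimensional ℂ (X ⧸ LinearMap.range ((ContinuousLinearMap.id ℂ X + C : X →L[ℂ] X) : X →ₗ[ℂ] X)) := by
  set S : X →L[ℂ] X := ContinuousLinearMap.id ℂ X + C with hSdef
  have hSapp : ∀ x, S x = x + C x := fun x => rfl
  -- the kernel is finite dimensional
  have hker : FiniteDimensional ℂ ↥(LinearMap.ker (S : X →ₗ[ℂ] X)) := by
    refine aux_findim_of_bound hC (ContinuousLinearMap.isClosed_ker S) (c := 1) ?_
    intro x hx
    have hx' : x + C x = 0 := by
      have := LinearMap.mem_ker.1 hx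
      rwa [ContinuousLinearMap.coe_coe, hSapp] at this
    have hxe : x = -C x := eq_neg_of_add_eq_zero_left hx'
    rw [one_mul]
    conv_lhs => rw [hxe]
    rw [norm_neg]
  -- the orthogonal complement of the kernel
  set V : Submodule ℂ X := (LinearMap.ker (S : X →ₗ[ℂ] X))ᗮ with hVdef
  have hVclosed : IsClosed (V : Set X) := Submodule.isClosed_orthogonal _
  haveI : CompleteSpace ↥(LinearMap.ker (S : X →ₗ[ℂ] X)) := FiniteDimensional.complete ℂ _
  have hsup : LinearMap.ker (S : X →ₗ[ℂ] X) ⊔ V = ⊤ := Submodule.sup_orthogonal_of_hasOrthogonalProjection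
  -- `S` is bounded below on `V`
  have hbound : ∃ c : ℝ, 0 < c ∧ ∀ v ∈ V, ‖v‖ ≤ c * ‖S v‖ := by
    by_contra hcon
    push_neg at hcon
    have h' : ∀ n : ℕ, ∃ v, v ∈ V ∧ ((n : ℝ) + 1) * ‖S v‖ < ‖v‖ := by
      intro n
      obtain ⟨v, hv1, hv2⟩ := hcon ((n : ℝ) + 1) (by positivity)
      exact ⟨v, hv1, hv2⟩
    choose v hvV hvlt using h'
    have hvne : ∀ n, ‖v n‖ ≠ 0 := by
      intro n h0
      have := hvlt n
      rw [h0] at this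
      nlinarith [norm_nonneg (S (v n)), this]
    set u : ℕ → X := fun n => ((‖v n‖⁻¹ : ℝ) : ℂ) • v n with hudef
    have huV : ∀ n, u n ∈ V := fun n => V.smul_mem _ (hvV n)
    have hun : ∀ n, ‖u n‖ = 1 := by
      intro n
      rw [hudef]
      simp only [norm_smul, Complex.norm_real, Real.norm_eq_abs, abs_inv, abs_norm]
      rw [inv_mul_cancel₀ (hvne n)]
    have hSu : ∀ n, ‖S (u n)‖ < 1 / ((n : ℝ) + 1) := by
      intro n
      have hpos : (0 : ℝ) < ‖v n‖ := lt_of_le_of_ne (norm_nonneg _) (Ne.symm (hvne n))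
      have h1 : ‖S (u n)‖ = ‖v n‖⁻¹ * ‖S (v n)‖ := by
        rw [hudef]
        simp only [map_smul, norm_smul, Complex.norm_real, Real.norm_eq_abs, abs_inv, abs_norm]
      rw [h1, lt_div_iff₀ (by positivity)]
      have := hvlt n
      calc ‖v n‖⁻¹ * ‖S (v n)‖ * ((n : ℝ) + 1) = ‖v n‖⁻¹ * (((n : ℝ) + 1) * ‖S (v n)‖) := by ring
        _ < ‖v n‖⁻¹ * ‖v n‖ := by
            exact mul_lt_mul_of_pos_left this (by positivity)
        _ = 1 := inv_mul_cancel₀ (hvne n)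
    obtain ⟨φ, hφ, y, hy⟩ := aux_compact_subseq hC (u := u) (M := 1) fun n => (hun n).le
    have hS0 : Tendsto (fun n => S (u (φ n))) atTop (𝓝 0) := by
      rw [tendsto_zero_iff_norm_tendsto_zero]
      refine squeeze_zero (fun n => norm_nonneg _) (fun n => (hSu (φ n)).le.trans ?_) 
        tendsto_one_div_add_atTop_nhds_zero_nat
      gcongr
      exact_mod_cast hφ.le_apply
    have hulim : Tendsto (fun n => u (φ n)) atTop (𝓝 (-y)) := by
      have : (fun n => u (φ n)) = fun n => S (u (φ n)) - C (u (φ n)) := by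
        funext n
        rw [hSapp]
        abel
      rw [this]
      simpa using hS0.sub hy
    have hyV : -y ∈ V := hVclosed.mem_of_tendsto hulim (Eventually.of_forall fun n => huV _)
    have hyker : -y ∈ LinearMap.ker (S : X →ₗ[ℂ] X) := by
      rw [LinearMap.mem_ker]
      have h1 : Tendsto (fun n => S (u (φ n))) atTop (𝓝 (S (-y))) :=
        (S.continuous.tendsto _).comp hulim
      exact tendsto_nhds_unique h1 hS0
    have hy0 : -y = 0 := by
      have := (Submodule.orthogonal_disjoint (LinearMap.ker (S : X →ₗ[ℂ] X))).le_bot ⟨hyker, hyV⟩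
      simpa using this
    have hyn : ‖(-y)‖ = 1 := by
      have h1 : Tendsto (fun n => ‖u (φ n)‖) atTop (𝓝 ‖(-y)‖) := hulim.norm
      have h2 : Tendsto (fun n => ‖u (φ n)‖) atTop (𝓝 1) := by
        simpa [hun] using tendsto_const_nhds (x := (1 : ℝ)) (f := atTop (α := ℕ))
      exact tendsto_nhds_unique h1 h2
    rw [hy0, norm_zero] at hyn
    exact zero_ne_one hyn
  obtain ⟨c, hc0, hcb⟩ := hbound
  -- closed range
  set f : ↥V →L[ℂ] X := S.comp V.subtypeL with hfdef
  have hf : ∀ w : ↥V, ‖w‖ ≤ c * ‖f w‖ := fun w => hcb w w.2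
  have hanti : AntilipschitzWith c.toNNReal f :=
    ContinuousLinearMap.antilipschitz_of_bound f (by
      intro x
      rw [Real.coe_toNNReal c hc0.le]
      exact hf x)
  haveI : CompleteSpace ↥V := hVclosed.completeSpace_coe
  have hrangef : IsClosed (Set.range f) := hanti.isClosed_range f.uniformContinuous
  have hrangeeq : ((LinearMap.range (S : X →ₗ[ℂ] X) : Submodule ℂ X) : Set X) = Set.range ⇑f := by
    ext x
    constructor
    · rintro ⟨z, rfl⟩
      obtain ⟨k, hk, w, hw, rfl⟩ := Submodule.mem_sup.1 (hsup ▸ Submodule.mem_top (x := z))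
      refine ⟨⟨w, hw⟩, ?_⟩
      have : S k = 0 := LinearMap.mem_ker.1 hk
      show S w = S (k + w)
      rw [map_add, this, zero_add]
    · rintro ⟨w, rfl⟩
      exact ⟨(w : X), rfl⟩
  have hNclosed : IsClosed ((LinearMap.range (S : X →ₗ[ℂ] X) : Submodule ℂ X) : Set X) := by
    rw [hrangeeq]; exact hrangef
  refine ⟨hNclosed, ?_⟩
  -- finite dimensional cokernel
  set N : Submodule ℂ X := LinearMap.range (S : X →ₗ[ℂ] X) with hNdef
  set W : Submodule ℂ X := Nᗮ with hWdef
  have hWfd : FiniteDimensional ℂ ↥W := by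
    refine aux_findim_of_bound hC (Submodule.isClosed_orthogonal _) (c := 1) ?_
    intro w hw
    have h0 : (inner ℂ (S w) w : ℂ) = 0 :=
      (Submodule.mem_orthogonal N w).1 hw (S w) (LinearMap.mem_range_self _ _)
    rw [hSapp, inner_add_left] at h0
    have h1 : (inner ℂ w w : ℂ) = -inner ℂ (C w) w := by linear_combination h0
    have e1 : ‖(inner ℂ w w : ℂ)‖ = ‖w‖ ^ 2 := by
      rw [inner_self_eq_norm_sq_to_K]
      simp [norm_pow]
    have e2 : ‖(inner ℂ w w : ℂ)‖ = ‖(inner ℂ (C w) w : ℂ)‖ := by rw [h1, norm_neg]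
    have h3 : (‖w‖ : ℝ) ^ 2 ≤ ‖C w‖ * ‖w‖ := by
      calc (‖w‖ : ℝ) ^ 2 = ‖(inner ℂ (C w) w : ℂ)‖ := by rw [← e1, e2]
        _ ≤ ‖C w‖ * ‖w‖ := norm_inner_le_norm _ _
    rcases eq_or_lt_of_le (norm_nonneg w) with h4 | h4
    · rw [← h4]
      positivity
    · rw [one_mul]
      nlinarith
  haveI : CompleteSpace ↥N := hNclosed.completeSpace_coe
  have hsup2 : N ⊔ W = ⊤ := Submodule.sup_orthogonal_of_hasOrthogonalProjection
  set g : ↥W →ₗ[ℂ] X ⧸ N := N.mkQ.comp W.subtype with hgdef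
  have hgsurj : Function.Surjective g := by
    intro q
    obtain ⟨x, rfl⟩ := N.mkQ_surjective q
    obtain ⟨n, hn, w, hw, rfl⟩ := Submodule.mem_sup.1 (hsup2 ▸ Submodule.mem_top (x := x))
    refine ⟨⟨w, hw⟩, ?_⟩
    show N.mkQ w = N.mkQ (n + w)
    rw [map_add]
    have : N.mkQ n = 0 := by
      rw [Submodule.mkQ_apply, Submodule.Quotient.mk_eq_zero]
      exact hn
    rw [this, zero_add]
  exact Module.Finite.of_surjective g hgsurj

end Riesz

/-- A linear map between normed `ℂ`-vector spaces is Fredholm if it has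
finite-dimensional kernel, finite-dimensional cokernel, and closed range. -/
def IsFredholm {E F : Type*} [NormedAddCommGroup E] [Module ℂ E]
    [NormedAddCommGroup F] [Module ℂ F] (T : E →ₗ[ℂ] F) : Prop :=
  FiniteDimensional ℂ (LinearMap.ker T) ∧
    FiniteDimensional ℂ (F ⧸ LinearMap.range T) ∧
    IsClosed ((LinearMap.range T : Submodule ℂ F) : Set F)

/-- The Fredholm index: `dim ker T - dim coker T`. -/
noncomputable def fredIndex {E F : Type*} [NormedAddCommGroup E] [Module ℂ E]
    [NormedAddCommGroup F] [Module ℂ F] (T : E →ₗ[ℂ] F) : ℤ :=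
  (Module.finrank ℂ (LinearMap.ker T) : ℤ) -
    (Module.finrank ℂ (F ⧸ LinearMap.range T) : ℤ)

/-- The operator `Q : range P → range Q` obtained by restricting `Q`. -/
noncomputable def restrictToRanges {H : Type*} [NormedAddCommGroup H]
    [InnerProductSpace ℂ H] (P Q : H →L[ℂ] H) :
    LinearMap.range (P : H →ₗ[ℂ] H) →ₗ[ℂ] LinearMap.range (Q : H →ₗ[ℂ] H) :=
  (Q : H →ₗ[ℂ] H).restrict (fun x _ => LinearMap.mem_range_self _ x)

/-- The relative index `ind(P, Q)` of two projections. -/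
noncomputable def relIndex {H : Type*} [NormedAddCommGroup H]
    [InnerProductSpace ℂ H] (P Q : H →L[ℂ] H) : ℤ :=
  fredIndex (restrictToRanges P Q)

/-- If `P₁, P₂` are bounded idempotents with compact difference, then
`P₂ : range P₁ → range P₂` is Fredholm. -/
theorem restriction_is_fredholm_of_compact_difference {H : Type*}
    [NormedAddCommGroup H] [InnerProductSpace ℂ H] [CompleteSpace H]
    (P₁ P₂ : H →L[ℂ] H) (h1 : P₁ ∘L P₁ = P₁) (h2 : P₂ ∘L P₂ = P₂)
    (hcpt : IsCompactOperator ⇑(P₁ - P₂)) :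
    IsFredholm (restrictToRanges P₁ P₂) := by
  -- basic facts about ranges of idempotents
  have hmem1 : ∀ x, x ∈ LinearMap.range (P₁ : H →ₗ[ℂ] H) ↔ P₁ x = x := by
    intro x
    constructor
    · rintro ⟨y, rfl⟩
      show P₁ (P₁ y) = P₁ y
      conv_lhs => rw [← ContinuousLinearMap.comp_apply, h1]
    · intro h
      exact ⟨x, h⟩
  have hmem2 : ∀ x, x ∈ LinearMap.range (P₂ : H →ₗ[ℂ] H) ↔ P₂ x = x := by
    intro x
    constructor
    · rintro ⟨y, rfl⟩
      show P₂ (P₂ y) = P₂ y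
      conv_lhs => rw [← ContinuousLinearMap.comp_apply, h2]
    · intro h
      exact ⟨x, h⟩
  have hM1c : IsClosed ((LinearMap.range (P₁ : H →ₗ[ℂ] H) : Submodule ℂ H) : Set H) := by
    have : ((LinearMap.range (P₁ : H →ₗ[ℂ] H) : Submodule ℂ H) : Set H) = {x | P₁ x = x} := by
      ext x; exact hmem1 x
    rw [this]
    exact isClosed_eq P₁.continuous continuous_id
  have hM2c : IsClosed ((LinearMap.range (P₂ : H →ₗ[ℂ] H) : Submodule ℂ H) : Set H) := by
    have : ((LinearMap.range (P₂ : H →ₗ[ℂ] H) : Submodule ℂ H) : Set H) = {x | P₂ x = x} := by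
      ext x; exact hmem2 x
    rw [this]
    exact isClosed_eq P₂.continuous continuous_id
  haveI : CompleteSpace ↥(LinearMap.range (P₂ : H →ₗ[ℂ] H)) := hM2c.completeSpace_coe
  have hTapp : ∀ x : ↥(LinearMap.range (P₁ : H →ₗ[ℂ] H)),
      ((restrictToRanges P₁ P₂ x : H)) = P₂ (x : H) := fun x => rfl
  -- Part 1: finite dimensional kernel
  have part1 : FiniteDimensional ℂ ↥(LinearMap.ker (restrictToRanges P₁ P₂)) := by
    set S₀ : Submodule ℂ H :=
      LinearMap.range (P₁ : H →ₗ[ℂ] H) ⊓ LinearMap.ker (P₂ : H →ₗ[ℂ] H) with hS0def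
    have hS0c : IsClosed ((S₀ : Submodule ℂ H) : Set H) := by
      have : ((S₀ : Submodule ℂ H) : Set H)
          = ((LinearMap.range (P₁ : H →ₗ[ℂ] H) : Submodule ℂ H) : Set H) ∩ {x | P₂ x = 0} := rfl
      rw [this]
      exact hM1c.inter (isClosed_eq P₂.continuous continuous_const)
    have hS0fd : FiniteDimensional ℂ ↥S₀ := by
      refine aux_findim_of_bound hcpt hS0c (c := 1) ?_
      rintro x ⟨hx1, hx2⟩
      have e1 : P₁ x = x := (hmem1 x).1 hx1
      have e2 : P₂ x = (0 : H) := hx2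
      have e3 : (P₁ - P₂) x = x := by
        rw [ContinuousLinearMap.sub_apply, e1, e2, sub_zero]
      rw [one_mul, e3]
    have hj : ∀ x : ↥(LinearMap.ker (restrictToRanges P₁ P₂)), ((x.1 : H)) ∈ S₀ := by
      intro x
      refine ⟨x.1.2, ?_⟩
      have hx := x.2
      rw [LinearMap.mem_ker] at hx
      show P₂ ((x.1 : H)) = 0
      have := congrArg Subtype.val hx
      rw [hTapp] at this
      exact this
    set j : ↥(LinearMap.ker (restrictToRanges P₁ P₂)) →ₗ[ℂ] ↥S₀ :=
      { toFun := fun x => ⟨(x.1 : H), hj x⟩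
        map_add' := fun a b => rfl
        map_smul' := fun c a => rfl } with hjdef
    have hjinj : Function.Injective j := by
      intro a b hab
      have := congrArg Subtype.val hab
      exact Subtype.ext (Subtype.ext this)
    exact FiniteDimensional.of_injective j hjinj
  -- the compact operator on M₂
  set M₂ : Submodule ℂ H := LinearMap.range (P₂ : H →ₗ[ℂ] H) with hM2def
  set D : H →L[ℂ] H := P₂ ∘L (P₁ - P₂) with hDdef
  have hDmem : ∀ y : ↥M₂, D ((M₂.subtypeL) y) ∈ M₂ := fun y => ⟨(P₁ - P₂) (y : H), rfl⟩
  set C : ↥M₂ →L[ℂ] ↥M₂ := (D.comp M₂.subtypeL).codRestrict M₂ hDmem with hCdef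
  have hCc : IsCompactOperator ⇑C := by
    have s1 : IsCompactOperator ⇑D := hcpt.continuous_comp P₂.continuous
    have s2 : IsCompactOperator (⇑D ∘ ⇑(M₂.subtypeL)) := s1.comp_clm M₂.subtypeL
    exact s2.codRestrict (fun x => hDmem x) hM2c
  set S : ↥M₂ →L[ℂ] ↥M₂ := ContinuousLinearMap.id ℂ ↥M₂ + C with hSdef
  have hS : ∀ y : ↥M₂, ((S y : H)) = P₂ (P₁ (y : H)) := by
    intro y
    have e0 : P₂ (y : H) = (y : H) := (hmem2 _).1 y.2
    show (y : H) + P₂ ((P₁ - P₂) (y : H)) = P₂ (P₁ (y : H))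
    rw [ContinuousLinearMap.sub_apply, map_sub]
    have e2 : P₂ (P₂ (y : H)) = P₂ (y : H) := by
      conv_lhs => rw [← ContinuousLinearMap.comp_apply, h2]
    rw [e2, e0]
    abel
  have hrange : LinearMap.range (S : ↥M₂ →ₗ[ℂ] ↥M₂) ≤ LinearMap.range (restrictToRanges P₁ P₂) := by
    rintro _ ⟨y, rfl⟩
    refine ⟨⟨P₁ (y : H), LinearMap.mem_range_self _ _⟩, ?_⟩
    refine Subtype.ext ?_
    rw [ContinuousLinearMap.coe_coe, hS y, hTapp]
  obtain ⟨hNc, hNq⟩ := aux_riesz hCc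
  rw [← hSdef] at hNc hNq
  set N : Submodule ℂ ↥M₂ := LinearMap.range (S : ↥M₂ →ₗ[ℂ] ↥M₂) with hNdef
  -- Part 2: finite dimensional cokernel
  have part2 : FiniteDimensional ℂ
      (↥M₂ ⧸ LinearMap.range (restrictToRanges P₁ P₂)) := by
    have hle : N ≤ (LinearMap.range (restrictToRanges P₁ P₂)).comap LinearMap.id := hrange
    set g := Submodule.mapQ N (LinearMap.range (restrictToRanges P₁ P₂)) LinearMap.id hle
      with hgdef
    have hgsurj : Function.Surjective g := by
      intro q
      obtain ⟨x, rfl⟩ := (LinearMap.range (restrictToRanges P₁ P₂)).mkQ_surjective q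
      refine ⟨N.mkQ x, ?_⟩
      rw [hgdef, Submodule.mkQ_apply, Submodule.mapQ_apply]
      rfl
    exact Module.Finite.of_surjective g hgsurj
  -- Part 3: closed range
  have part3 : IsClosed
      ((LinearMap.range (restrictToRanges P₁ P₂) : Submodule ℂ ↥M₂) : Set ↥M₂) := by
    letI : NormedAddCommGroup (↥M₂ ⧸ N) := Submodule.Quotient.normedAddCommGroup (hS := hNc)
    haveI : FiniteDimensional ℂ (↥M₂ ⧸ N) := hNq
    have hcont : Continuous N.mkQ :=
      AddMonoidHomClass.continuous_of_bound N.mkQ 1 fun x => by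
        simpa using Submodule.Quotient.norm_mk_le N x
    have heq : ((LinearMap.range (restrictToRanges P₁ P₂) : Submodule ℂ ↥M₂) : Set ↥M₂)
        = N.mkQ ⁻¹' (((LinearMap.range (restrictToRanges P₁ P₂)).map N.mkQ :
            Submodule ℂ (↥M₂ ⧸ N)) : Set (↥M₂ ⧸ N)) := by
      ext x
      simp only [Set.mem_preimage, SetLike.mem_coe, Submodule.mem_map]
      constructor
      · exact fun hx => ⟨x, hx, rfl⟩
      · rintro ⟨z, hz, hzx⟩
        have hxz : x - z ∈ N := by
          rw [← Submodule.Quotient.eq]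
          rw [Submodule.mkQ_apply, Submodule.mkQ_apply] at hzx
          exact hzx.symm
        have hxe : x = z + (x - z) := by abel
        rw [hxe]
        exact (LinearMap.range (restrictToRanges P₁ P₂)).add_mem hz (hrange hxz)
    rw [heq]
    exact (Submodule.closed_of_finiteDimensional _).preimage hcont
  exact ⟨part1, part2, part3⟩
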